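/- Let K be a field, let p, q ∈ K[X] be nonzero polynomials, and let r, s ∈ K[X] satisfy r·q + s·p = 1 (equivalently, 1/(pq) = r/p + s/q in K(X)). Then for all positive integers m and n, the following identity holds in K(X): 1/(p^m q^n) = Σ_{i=0}^{m−1} C(n−1+i, i) · r^n s^i / p^{m−i} + Σ_{j=0}^{n−1} C(m−1+j, j) · r^j s^m / q^{n−j}, where C(a, b) denotes the binomial coefficient a choose b. -/

import Mathlib

open Polynomial Finset

private lemma nat1 (m N : ℕ) :
    (m + 1 + N).choose N = (m + N).choose N + (m + N).choose (m + 1) := by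
  cases N with
  | zero => simp [Nat.choose_eq_zero_of_lt (Nat.lt_succ_self m)]
  | succ N =>
    have h3 : (m + N + 1).choose N = (m + N + 1).choose (m + 1) := by
      have := Nat.choose_symm (show m + 1 ≤ m + N + 1 by omega)
      simpa [show m + N + 1 - (m + 1) = N by omega] using this
    have h1 : m + 1 + (N + 1) = (m + N + 1) + 1 := by omega
    have h2 : m + (N + 1) = m + N + 1 := by omega
    rw [h1, h2, Nat.choose_succ_succ, h3, Nat.add_comm]

private lemma lemC {R : Type*} [CommRing R] (y : R) (m : ℕ) : ∀ N : ℕ,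
    (1 - y) * ∑ j ∈ range N, ((m + 1 + j).choose j : R) * y ^ j
      + ((m + N).choose (m + 1) : R) * y ^ N
    = ∑ j ∈ range N, ((m + j).choose j : R) * y ^ j
  | 0 => by simp [Nat.choose_eq_zero_of_lt (Nat.lt_succ_self m)]
  | (N + 1) => by
    have IH := lemC y m N
    rw [sum_range_succ, sum_range_succ]
    have ha : ((m + 1 + N).choose N : R)
        = ((m + N).choose N : R) + ((m + N).choose (m + 1) : R) := by
      exact_mod_cast congrArg (Nat.cast (R := R)) (nat1 m N)
    have hb : ((m + (N + 1)).choose (m + 1) : R) = ((m + 1 + N).choose N : R) := by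
      have h3 : (m + N + 1).choose N = (m + N + 1).choose (m + 1) := by
        have := Nat.choose_symm (show m + 1 ≤ m + N + 1 by omega)
        simpa [show m + N + 1 - (m + 1) = N by omega] using this
      rw [show m + (N + 1) = m + N + 1 by omega, show m + 1 + N = m + N + 1 by omega, h3]
    linear_combination IH + y ^ N * ha + y ^ (N + 1) * hb

private lemma lemA {R : Type*} [CommRing R] : ∀ (m : ℕ) (n : ℕ) (x y : R), x + y = 1 →
    y ^ (n + 1) * ∑ i ∈ range (m + 1), ((n + i).choose i : R) * x ^ i
      + x ^ (m + 1) * ∑ j ∈ range (n + 1), ((m + j).choose j : R) * y ^ j = 1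
  | 0, n, x, y, h => by
    simp only [zero_add, Nat.choose_self, Nat.cast_one, one_mul]
    rw [sum_range_one]
    simp only [Nat.choose_zero_right, Nat.cast_one, pow_zero, one_mul, mul_one]
    have hg : (∑ j ∈ range (n + 1), y ^ j) * (y - 1) = y ^ (n + 1) - 1 := geom_sum_mul y (n + 1)
    linear_combination -hg + (∑ j ∈ range (n + 1), y ^ j) * h
  | (m + 1), n, x, y, h => by
    have IH := lemA m n x y h
    have hC := lemC y m (n + 1)
    rw [show m + (n + 1) = n + (m + 1) by omega] at hC
    rw [sum_range_succ]
    linear_combination IH + x ^ (m + 1) * hC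
      + x ^ (m + 1) * (∑ j ∈ range (n + 1), ((m + 1 + j).choose j : R) * y ^ j) * h

private lemma lemF {F : Type*} [Field F] (P Q R S : F) (hP : P ≠ 0) (hQ : Q ≠ 0)
    (h : R * Q + S * P = 1) (m n : ℕ) :
    1 / (P ^ (m + 1) * Q ^ (n + 1)) =
      (∑ i ∈ range (m + 1), ((n + i).choose i : F) * (R ^ (n + 1) * S ^ i) / P ^ (m + 1 - i))
      + ∑ j ∈ range (n + 1), ((m + j).choose j : F) * (R ^ j * S ^ (m + 1)) / Q ^ (n + 1 - j) := by
  have key := lemA m n (S * P) (R * Q) (by linear_combination h)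
  have hD : P ^ (m + 1) * Q ^ (n + 1) ≠ 0 :=
    mul_ne_zero (pow_ne_zero _ hP) (pow_ne_zero _ hQ)
  have h1 : ∀ i ∈ range (m + 1), ((n + i).choose i : F) * (R ^ (n + 1) * S ^ i) / P ^ (m + 1 - i)
      = ((n + i).choose i : F) * ((R * Q) ^ (n + 1) * (S * P) ^ i) / (P ^ (m + 1) * Q ^ (n + 1)) := by
    intro i hi
    have hi' := mem_range.mp hi
    rw [div_eq_div_iff (pow_ne_zero _ hP) hD]
    have hpow : P ^ (m + 1 - i) * P ^ i = P ^ (m + 1) := by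
      rw [← pow_add]; congr 1; omega
    rw [← hpow]; ring
  have h2 : ∀ j ∈ range (n + 1), ((m + j).choose j : F) * (R ^ j * S ^ (m + 1)) / Q ^ (n + 1 - j)
      = ((m + j).choose j : F) * ((S * P) ^ (m + 1) * (R * Q) ^ j) / (P ^ (m + 1) * Q ^ (n + 1)) := by
    intro j hj
    have hj' := mem_range.mp hj
    rw [div_eq_div_iff (pow_ne_zero _ hQ) hD]
    have hpow : Q ^ (n + 1 - j) * Q ^ j = Q ^ (n + 1) := by
      rw [← pow_add]; congr 1; omega
    rw [← hpow]; ring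
  rw [Finset.sum_congr rfl h1, Finset.sum_congr rfl h2, ← Finset.sum_div, ← Finset.sum_div,
    ← add_div]
  have hnum : (∑ i ∈ range (m + 1), ((n + i).choose i : F) * ((R * Q) ^ (n + 1) * (S * P) ^ i))
      + ∑ j ∈ range (n + 1), ((m + j).choose j : F) * ((S * P) ^ (m + 1) * (R * Q) ^ j) = 1 := by
    rw [Finset.mul_sum, Finset.mul_sum] at key
    rw [← key]
    congr 1 <;> exact Finset.sum_congr rfl (fun i _ => by ring)
  rw [hnum]

theorem stmt4 {K : Type*} [Field K] (p q r s : K[X]) (hp : p ≠ 0) (hq : q ≠ 0)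
    (hrs : r * q + s * p = 1) (m n : ℕ) (hm : 0 < m) (hn : 0 < n) :
    1 / algebraMap K[X] (RatFunc K) (p ^ m * q ^ n) =
      (∑ i ∈ Finset.range m, ((n - 1 + i).choose i : RatFunc K) *
        algebraMap K[X] (RatFunc K) (r ^ n * s ^ i) /
          algebraMap K[X] (RatFunc K) (p ^ (m - i))) +
      ∑ j ∈ Finset.range n, ((m - 1 + j).choose j : RatFunc K) *
        algebraMap K[X] (RatFunc K) (r ^ j * s ^ m) /
          algebraMap K[X] (RatFunc K) (q ^ (n - j)) := by
  obtain ⟨m, rfl⟩ := Nat.exists_eq_succ_of_ne_zero hm.ne'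
  obtain ⟨n, rfl⟩ := Nat.exists_eq_succ_of_ne_zero hn.ne'
  simp only [Nat.add_sub_cancel, map_mul, map_pow]
  exact lemF _ _ _ _ (RatFunc.algebraMap_ne_zero hp) (RatFunc.algebraMap_ne_zero hq)
    (by rw [← map_mul, ← map_mul, ← map_add, hrs, map_one]) m n
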